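/- In a category C equipped with: a terminal object, a class of fibrations containing isomorphisms and all maps to the terminal object, closed under pullback, such that every object is fibrant, every morphism factors as an acyclic cofibration (a map with the left lifting property against all fibrations) followed by a fibration — any acyclic cofibration f : A → B is a right homotopy equivalence: there exists g : B → A with g ∘ f = id_A and a map h : B → PB over B × B witnessing f ∘ g right homotopic to id_B, where PB is any factorization of the diagonal B → B × B into an acyclic cofibration followed by a fibration. -/
import Mathlib


open CategoryTheory CategoryTheory.Limits

universe v u

/-- in a type-theoretic fibration category, acyclic cofibrations are
right homotopy equivalences. -/
theorem stmt18 {C : Type u} [Category.{v} C]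
    (T : C) (hT : IsTerminal T)
    (Fib : MorphismProperty C)
    (hiso : ∀ {X Y : C} (f : X ⟶ Y), IsIso f → Fib f)
    (hterm : ∀ (X : C) (t : X ⟶ T), Fib t)
    (hpb : ∀ {P X Y Z : C} (fst : P ⟶ X) (snd : P ⟶ Y) (f : X ⟶ Z) (g : Y ⟶ Z),
      IsPullback fst snd f g → Fib g → Fib fst)
    (hfact : ∀ {X Y : C} (f : X ⟶ Y), ∃ (Z : C) (i : X ⟶ Z) (p : Z ⟶ Y),
      (∀ {V W : C} (m : V ⟶ W), Fib m → HasLiftingProperty i m) ∧ Fib p ∧ i ≫ p = f)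
    {A B : C} (f : A ⟶ B)
    (hf : ∀ {V W : C} (m : V ⟶ W), Fib m → HasLiftingProperty f m)
    (BB : C) (p₁ p₂ : BB ⟶ B) (hBB : IsLimit (BinaryFan.mk p₁ p₂))
    (d : B ⟶ BB) (hd₁ : d ≫ p₁ = 𝟙 B) (hd₂ : d ≫ p₂ = 𝟙 B)
    (PB : C) (w : B ⟶ PB) (q : PB ⟶ BB)
    (hw : ∀ {V W : C} (m : V ⟶ W), Fib m → HasLiftingProperty w m)
    (hq : Fib q) (hwq : w ≫ q = d) :
    ∃ g : B ⟶ A, f ≫ g = 𝟙 A ∧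
      ∃ h : B ⟶ PB, h ≫ q ≫ p₁ = g ≫ f ∧ h ≫ q ≫ p₂ = 𝟙 B := by
  -- obtain g by lifting against A ⟶ T
  haveI := hf (hT.from A) (hterm A _)
  have sq1 : CommSq (𝟙 A) f (hT.from A) (hT.from B) := ⟨hT.hom_ext _ _⟩
  let g := sq1.lift
  have hg : f ≫ g = 𝟙 A := sq1.fac_left
  refine ⟨g, hg, ?_⟩
  -- the map b = ⟨g ≫ f, 𝟙 B⟩
  let b : B ⟶ BB := hBB.lift (BinaryFan.mk (g ≫ f) (𝟙 B))
  have hb₁ : b ≫ p₁ = g ≫ f := hBB.fac (BinaryFan.mk (g ≫ f) (𝟙 B)) ⟨WalkingPair.left⟩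
  have hb₂ : b ≫ p₂ = 𝟙 B := hBB.fac (BinaryFan.mk (g ≫ f) (𝟙 B)) ⟨WalkingPair.right⟩
  haveI := hf q hq
  have sq2 : CommSq (f ≫ w) f q b := by
    constructor
    refine hBB.hom_ext fun j => ?_
    rcases j with ⟨_ | _⟩
    · have : (BinaryFan.mk p₁ p₂).π.app ⟨WalkingPair.left⟩ = p₁ := rfl
      rw [this]
      simp [hwq, hb₁, reassoc_of% hg, hd₁]
    · have : (BinaryFan.mk p₁ p₂).π.app ⟨WalkingPair.right⟩ = p₂ := rfl
      rw [this]
      simp [hwq, hb₂, hd₂]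
  let h := sq2.lift
  have hh₂ : h ≫ q = b := sq2.fac_right
  refine ⟨h, ?_, ?_⟩
  · rw [← Category.assoc, hh₂, hb₁]
  · rw [← Category.assoc, hh₂, hb₂]
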